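/- Let h be a smooth function on ℝᵏ × ℝⁿ × ℝ^{nk} × ℝᵏ with coordinates (x^α, yᵃ, p^α_a, s^α), and let X = (X_α) be a k-vector field with components X_α = A^β_α ∂/∂x^β + Bᵃ_α ∂/∂yᵃ + C^β_{αa} ∂/∂p^β_a + D^β_α ∂/∂s^β. Then X satisfies the k-cocontact Hamilton–de Donder–Weyl equations ι_{X_α} dη^α = dh − (∂h/∂x^α)τ^α − (∂h/∂s^α)η^α, ι_{X_α}η^α = −h, ι_{X_α}τ^β = δ^β_α (with τ^α = dx^α, η^α = ds^α − p^α_a dyᵃ) if and only if A^β_α = δ^β_α, Bᵃ_α = ∂h/∂p^α_a, C^α_{αa} = −(∂h/∂yᵃ + p^α_a ∂h/∂s^α), and D^α_α = p^α_a ∂h/∂p^α_a − h (summation over repeated α and a). -/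
import Mathlib


/-- The canonical `k`-cocontact model in coordinates `(x, y, p, s)`. -/
abbrev CoModel (n k : ℕ) :=
  (Fin k → ℝ) × (Fin n → ℝ) × (Fin k → Fin n → ℝ) × (Fin k → ℝ)

/-- `τ^α = dx^α`. -/
def ctau (n k : ℕ) (α : Fin k) (v : CoModel n k) : ℝ := v.1 α

/-- `η^α = ds^α − p^α_a dyᵃ` at `m` on `v`. -/
def ceta (n k : ℕ) (α : Fin k) (m v : CoModel n k) : ℝ :=
  v.2.2.2 α - ∑ a, m.2.2.1 α a * v.2.1 a

/-- `dη^α = dyᵃ ∧ dp^α_a`. -/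
def cdeta (n k : ℕ) (α : Fin k) (u v : CoModel n k) : ℝ :=
  ∑ a, (u.2.1 a * v.2.2.1 α a - v.2.1 a * u.2.2.1 α a)

/-- coordinate directions. -/
def cxdir (n k : ℕ) (α : Fin k) : CoModel n k := (Pi.single α (1:ℝ), 0, 0, 0)
def cydir (n k : ℕ) (a : Fin n) : CoModel n k := (0, Pi.single a (1:ℝ), 0, 0)
def cpdir (n k : ℕ) (α : Fin k) (a : Fin n) : CoModel n k :=
  (0, 0, Pi.single α (Pi.single a (1:ℝ)), 0)
def csdir (n k : ℕ) (α : Fin k) : CoModel n k := (0, 0, 0, Pi.single α (1:ℝ))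

section comps
variable (n k : ℕ) (α : Fin k) (a : Fin n)
lemma cx1 : (cxdir n k α).1 = Pi.single α (1:ℝ) := rfl
lemma cx2 : (cxdir n k α).2.1 = 0 := rfl
lemma cx3 : (cxdir n k α).2.2.1 = 0 := rfl
lemma cx4 : (cxdir n k α).2.2.2 = 0 := rfl
lemma cy1 : (cydir n k a).1 = 0 := rfl
lemma cy2 : (cydir n k a).2.1 = Pi.single a (1:ℝ) := rfl
lemma cy3 : (cydir n k a).2.2.1 = 0 := rfl
lemma cy4 : (cydir n k a).2.2.2 = 0 := rfl
lemma cp1 : (cpdir n k α a).1 = 0 := rfl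
lemma cp2 : (cpdir n k α a).2.1 = 0 := rfl
lemma cp3 : (cpdir n k α a).2.2.1 = Pi.single α (Pi.single a (1:ℝ)) := rfl
lemma cp4 : (cpdir n k α a).2.2.2 = 0 := rfl
lemma cs1 : (csdir n k α).1 = 0 := rfl
lemma cs2 : (csdir n k α).2.1 = 0 := rfl
lemma cs3 : (csdir n k α).2.2.1 = 0 := rfl
lemma cs4 : (csdir n k α).2.2.2 = Pi.single α (1:ℝ) := rfl
end comps

lemma decomp (n k : ℕ) (v : CoModel n k) :
    v = (∑ α, v.1 α • cxdir n k α) + (∑ a, v.2.1 a • cydir n k a)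
      + (∑ α, ∑ a, v.2.2.1 α a • cpdir n k α a) + (∑ α, v.2.2.2 α • csdir n k α) := by
  refine Prod.ext ?_ (Prod.ext ?_ (Prod.ext ?_ ?_)) <;>
    · funext i
      try funext j
      simp [cxdir, cydir, cpdir, csdir, Prod.fst_sum, Prod.snd_sum,
        Finset.sum_apply, Pi.single_apply, mul_ite]

lemma lin (n k : ℕ) (L : CoModel n k →L[ℝ] ℝ) (v : CoModel n k) :
    L v = (∑ α, v.1 α * L (cxdir n k α)) + (∑ a, v.2.1 a * L (cydir n k a))
      + (∑ α, ∑ a, v.2.2.1 α a * L (cpdir n k α a)) + (∑ α, v.2.2.2 α * L (csdir n k α)) := by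
  conv_lhs => rw [decomp n k v]
  simp [map_sum, smul_eq_mul]

/-- coordinate characterization of the `k`-cocontact
Hamilton–de Donder–Weyl equations for a `k`-vector field. -/
theorem stmt_10 (n k : ℕ) (h : CoModel n k → ℝ) (hh : Differentiable ℝ h)
    (X : Fin k → CoModel n k → CoModel n k) :
    -- intrinsic HDW equations
    (∀ m : CoModel n k,
      (∀ v : CoModel n k,
        (∑ α, cdeta n k α (X α m) v) =
          fderiv ℝ h m v
            - (∑ α, fderiv ℝ h m (cxdir n k α) * ctau n k α v)
            - (∑ α, fderiv ℝ h m (csdir n k α) * ceta n k α m v)) ∧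
      ((∑ α, ceta n k α m (X α m)) = -h m) ∧
      (∀ α β : Fin k, ctau n k β (X α m) = (if β = α then 1 else 0)))
    ↔
    -- coordinate conditions on the components A, B, C, D
    (∀ m : CoModel n k,
      (∀ α : Fin k, (X α m).1 = Pi.single α (1:ℝ)) ∧
      (∀ (α : Fin k) (a : Fin n), (X α m).2.1 a = fderiv ℝ h m (cpdir n k α a)) ∧
      (∀ a : Fin n,
        (∑ α, (X α m).2.2.1 α a) =
          -(fderiv ℝ h m (cydir n k a)
            + ∑ α, m.2.2.1 α a * fderiv ℝ h m (csdir n k α))) ∧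
      ((∑ α, (X α m).2.2.2 α) =
        (∑ α, ∑ a, m.2.2.1 α a * fderiv ℝ h m (cpdir n k α a)) - h m)) := by
  constructor
  · intro H m
    obtain ⟨H1, H2, H3⟩ := H m
    have hB : ∀ (α : Fin k) (a : Fin n),
        (X α m).2.1 a = fderiv ℝ h m (cpdir n k α a) := by
      intro α a
      have := H1 (cpdir n k α a)
      simpa [cdeta, ceta, ctau, cp1, cp2, cp3, cp4, Pi.single_apply, ite_apply,
        mul_ite, ite_mul, Finset.sum_ite_eq, Finset.sum_ite_eq'] using this
    refine ⟨?_, hB, ?_, ?_⟩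
    · intro α
      funext β
      have := H3 α β
      simpa [ctau, Pi.single_apply] using this
    · intro a
      have := H1 (cydir n k a)
      simp only [cdeta, ceta, ctau, cy1, cy2, cy3, cy4] at this
      simp [Pi.single_apply, mul_ite, ite_mul, Finset.sum_ite_eq,
        Finset.sum_ite_eq', Finset.sum_sub_distrib] at this
      have hc : (∑ α, fderiv ℝ h m (csdir n k α) * m.2.2.1 α a)
          = ∑ α, m.2.2.1 α a * fderiv ℝ h m (csdir n k α) :=
        Finset.sum_congr rfl fun _ _ => mul_comm _ _
      linarith [this, hc]
    · have := H2
      simp only [ceta, Finset.sum_sub_distrib] at this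
      have hr : (∑ α, ∑ a, m.2.2.1 α a * (X α m).2.1 a)
          = ∑ α, ∑ a, m.2.2.1 α a * fderiv ℝ h m (cpdir n k α a) :=
        Finset.sum_congr rfl fun α _ => Finset.sum_congr rfl fun a _ => by rw [hB α a]
      linarith [this, hr]
  · intro H m
    obtain ⟨hA, hB, hC, hD⟩ := H m
    refine ⟨?_, ?_, ?_⟩
    · intro v
      have hL : (∑ α, cdeta n k α (X α m) v)
          = (∑ α, ∑ a, fderiv ℝ h m (cpdir n k α a) * v.2.2.1 α a)
            + ∑ a, v.2.1 a * (fderiv ℝ h m (cydir n k a)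
                + ∑ α, m.2.2.1 α a * fderiv ℝ h m (csdir n k α)) := by
        simp only [cdeta, Finset.sum_sub_distrib]
        have e1 : (∑ α, ∑ a, (X α m).2.1 a * v.2.2.1 α a)
            = ∑ α, ∑ a, fderiv ℝ h m (cpdir n k α a) * v.2.2.1 α a :=
          Finset.sum_congr rfl fun α _ => Finset.sum_congr rfl fun a _ => by rw [hB α a]
        have e2 : (∑ α, ∑ a, v.2.1 a * (X α m).2.2.1 α a)
            = -∑ a, v.2.1 a * (fderiv ℝ h m (cydir n k a)
                + ∑ α, m.2.2.1 α a * fderiv ℝ h m (csdir n k α)) := by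
          rw [Finset.sum_comm, ← Finset.sum_neg_distrib]
          refine Finset.sum_congr rfl fun a _ => ?_
          rw [← Finset.mul_sum, hC a]
          ring
        rw [e1, e2]; ring
      rw [hL, lin n k (fderiv ℝ h m) v]
      simp only [ceta, ctau]
      have h1 : (∑ α, fderiv ℝ h m (cxdir n k α) * v.1 α)
          = ∑ α, v.1 α * fderiv ℝ h m (cxdir n k α) :=
        Finset.sum_congr rfl fun _ _ => mul_comm _ _
      have h2 : (∑ α, fderiv ℝ h m (csdir n k α)
            * (v.2.2.2 α - ∑ a, m.2.2.1 α a * v.2.1 a))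
          = (∑ α, v.2.2.2 α * fderiv ℝ h m (csdir n k α))
            - ∑ α, fderiv ℝ h m (csdir n k α) * ∑ a, m.2.2.1 α a * v.2.1 a := by
        rw [← Finset.sum_sub_distrib]
        exact Finset.sum_congr rfl fun _ _ => by ring
      have h3 : (∑ α, ∑ a, fderiv ℝ h m (cpdir n k α a) * v.2.2.1 α a)
          = ∑ α, ∑ a, v.2.2.1 α a * fderiv ℝ h m (cpdir n k α a) :=
        Finset.sum_congr rfl fun α _ => Finset.sum_congr rfl fun _ _ => mul_comm _ _
      have h4 : (∑ a, v.2.1 a * ∑ α, m.2.2.1 α a * fderiv ℝ h m (csdir n k α))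
          = ∑ α, fderiv ℝ h m (csdir n k α) * ∑ a, m.2.2.1 α a * v.2.1 a := by
        simp only [Finset.mul_sum]
        rw [Finset.sum_comm]
        exact Finset.sum_congr rfl fun α _ => Finset.sum_congr rfl fun a _ => by ring
      have h5 : (∑ a, v.2.1 a * (fderiv ℝ h m (cydir n k a)
            + ∑ α, m.2.2.1 α a * fderiv ℝ h m (csdir n k α)))
          = (∑ a, v.2.1 a * fderiv ℝ h m (cydir n k a))
            + ∑ a, v.2.1 a * ∑ α, m.2.2.1 α a * fderiv ℝ h m (csdir n k α) := by
        rw [← Finset.sum_add_distrib]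
        exact Finset.sum_congr rfl fun _ _ => by ring
      rw [h5, h4, h2]
      linarith [h1, h3]
    · simp only [ceta, Finset.sum_sub_distrib]
      rw [hD]
      have : (∑ α, ∑ a, m.2.2.1 α a * (X α m).2.1 a)
          = ∑ α, ∑ a, m.2.2.1 α a * fderiv ℝ h m (cpdir n k α a) :=
        Finset.sum_congr rfl fun α _ => Finset.sum_congr rfl fun a _ => by rw [hB α a]
      rw [this]; ring
    · intro α β
      simp [ctau, hA α, Pi.single_apply]
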